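/- Fix integers d ≥ 2 and t ≥ 1. There exists a constant C > 0, depending only on d and t, such that for every natural number k ≥ 2 and every grid P = {0, 1, …, m−1}^d ⊆ ℝ^d, there exists a coloring χ of the t-element subsets of P with k colors such that for every axis-parallel closed box B = ∏_{i=1}^d [a_i, b_i] with |B ∩ P| ≥ C · (k · ln k)^{1/t} and for every color c ∈ {1, …, k}, there exists a t-element subset T ⊆ B ∩ P with χ(T) = c. -/

import Mathlib

open Finset

private lemma exists_coloring {α : Type*} [Fintype α] [DecidableEq α] (k t M : ℕ) (hk : 1 ≤ k)
    (𝓑 : Finset (Finset α)) (hM : ∀ Q ∈ 𝓑, M ≤ (Q.powersetCard t).card)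
    (hlt : 𝓑.card * k * (k-1)^M < k^M) :
    ∃ f : Finset α → Fin k, ∀ Q ∈ 𝓑, ∀ c : Fin k, ∃ T ∈ Q.powersetCard t, f T = c := by
  classical
  rcases 𝓑.eq_empty_or_nonempty with rfl | ⟨Q₀, hQ₀⟩
  · exact ⟨fun _ => ⟨0, hk⟩, by simp⟩
  set S := Fintype.card (Finset α) with hS
  have hcard_le : ∀ Q : Finset α, (Q.powersetCard t).card ≤ S := by
    intro Q
    exact (Q.powersetCard t).card_le_univ.trans_eq (by simp [hS])
  have hMS : M ≤ S := le_trans (hM Q₀ hQ₀) (hcard_le Q₀)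
  set Bad : Finset α → Fin k → Finset (Finset α → Fin k) :=
    fun Q c => Fintype.piFinset
      (fun T => if T ∈ Q.powersetCard t then ({c}ᶜ : Finset (Fin k)) else Finset.univ) with hBad
  have memBad : ∀ Q c f, f ∈ Bad Q c ↔ ∀ T ∈ Q.powersetCard t, f T ≠ c := by
    intro Q c f
    simp only [hBad, Fintype.mem_piFinset]
    constructor
    · intro h T hT
      have := h T
      simpa [hT] using this
    · intro h T
      by_cases hT : T ∈ Q.powersetCard t <;> simp [hT, h]
  have cardBad : ∀ Q c, (Bad Q c).card
      = (k-1)^((Q.powersetCard t).card) * k^(S - (Q.powersetCard t).card) := by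
    intro Q c
    rw [hBad, Fintype.card_piFinset]
    have h1 : ∀ T : Finset α,
        (if T ∈ Q.powersetCard t then ({c}ᶜ : Finset (Fin k)) else Finset.univ).card
        = if T ∈ Q.powersetCard t then k - 1 else k := by
      intro T; by_cases hT : T ∈ Q.powersetCard t <;> simp [hT, Finset.card_compl]
    simp only [h1]
    rw [Finset.prod_ite, Finset.prod_const, Finset.prod_const]
    congr 1
    · congr 1
      rw [Finset.filter_mem_eq_inter, Finset.univ_inter]
    · congr 1
      have := Finset.card_filter_add_card_filter_not
        (s := (Finset.univ : Finset (Finset α))) (p := fun T => T ∈ Q.powersetCard t)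
      have h2 : (Finset.univ.filter (fun T => T ∈ Q.powersetCard t)).card
          = (Q.powersetCard t).card := by
        congr 1
        rw [Finset.filter_mem_eq_inter, Finset.univ_inter]
      have h3 : (Finset.univ : Finset (Finset α)).card = S := by simp [hS]
      omega
  -- per-term bound
  have hterm : ∀ Q ∈ 𝓑, ∀ c : Fin k, (Bad Q c).card ≤ (k-1)^M * k^(S-M) := by
    intro Q hQ c
    rw [cardBad Q c]
    set m := (Q.powersetCard t).card with hm
    have hMm : M ≤ m := hM Q hQ
    have hmS : m ≤ S := hcard_le Q
    calc (k-1)^m * k^(S-m) = (k-1)^M * ((k-1)^(m-M) * k^(S-m)) := by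
          rw [← mul_assoc, ← pow_add]; congr 2; omega
      _ ≤ (k-1)^M * (k^(m-M) * k^(S-m)) := by
          apply Nat.mul_le_mul_left
          apply Nat.mul_le_mul_right
          exact Nat.pow_le_pow_left (Nat.sub_le k 1) _
      _ = (k-1)^M * k^(S-M) := by
          rw [← pow_add]
          have : m - M + (S - m) = S - M := by omega
          rw [this]
  -- the union of bad events
  set bad : Finset (Finset α → Fin k) :=
    𝓑.biUnion (fun Q => Finset.univ.biUnion (fun c => Bad Q c)) with hbad
  have hbadcard : bad.card < Fintype.card (Finset α → Fin k) := by
    have h1 : bad.card ≤ 𝓑.card * (k * ((k-1)^M * k^(S-M))) := by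
      refine le_trans (Finset.card_biUnion_le) ?_
      refine le_trans (Finset.sum_le_sum (fun Q hQ => Finset.card_biUnion_le)) ?_
      refine le_trans (Finset.sum_le_sum (fun Q hQ =>
        Finset.sum_le_sum (fun c _ => hterm Q hQ c))) ?_
      simp [Finset.sum_const, Fintype.card_fin, mul_assoc]
    have h2 : Fintype.card (Finset α → Fin k) = k^S := by
      rw [Fintype.card_fun, Fintype.card_fin]
    rw [h2]
    calc bad.card ≤ 𝓑.card * (k * ((k-1)^M * k^(S-M))) := h1
      _ = (𝓑.card * k * (k-1)^M) * k^(S-M) := by ring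
      _ < k^M * k^(S-M) := by
          exact (Nat.mul_lt_mul_right (Nat.pow_pos hk)).mpr hlt
      _ = k^S := by rw [← pow_add]; congr 1; omega
  obtain ⟨f, hf⟩ : ∃ f : Finset α → Fin k, f ∉ bad := by
    by_contra h
    push_neg at h
    have : (Finset.univ : Finset (Finset α → Fin k)) ⊆ bad := fun f _ => h f
    have := Finset.card_le_card this
    simp only [Finset.card_univ] at this
    omega
  refine ⟨f, fun Q hQ c => ?_⟩
  have : f ∉ Bad Q c := by
    intro hmem
    exact hf (Finset.mem_biUnion.2 ⟨Q, hQ, Finset.mem_biUnion.2 ⟨c, Finset.mem_univ c, hmem⟩⟩)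
  rw [memBad] at this
  push_neg at this
  exact this

set_option maxHeartbeats 4000000 in

private lemma key_ineq (d t k N₀ : ℕ) (hd : 2 ≤ d) (ht : 1 ≤ t) (hk : 2 ≤ k)
    (hlow : 400*(d:ℝ)^2*t^2 * (((k:ℝ) * Real.log k) ^ ((1:ℝ)/t)) ≤ N₀)
    (hhigh : (N₀:ℝ) ≤ 401*(d:ℝ)^2*t^2 * (((k:ℝ) * Real.log k) ^ ((1:ℝ)/t))) :
    N₀^(2*d) * k * (k-1)^(N₀.choose t) < k^(N₀.choose t) := by
  have hdR : (2:ℝ) ≤ d := by exact_mod_cast hd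
  have htR : (1:ℝ) ≤ t := by exact_mod_cast ht
  have hkR : (2:ℝ) ≤ k := by exact_mod_cast hk
  set L := Real.log k with hLdef
  have hLhalf : (1/2 : ℝ) ≤ L := by
    have h2 : Real.log 2 ≤ L := Real.log_le_log (by norm_num) hkR
    have := Real.log_two_gt_d9
    linarith
  have hLk : L ≤ k := by
    have := Real.log_le_sub_one_of_pos (show (0:ℝ) < k by linarith)
    linarith
  have hkL1 : 1 ≤ (k:ℝ) * L := by nlinarith
  have hkLpos : 0 < (k:ℝ) * L := by linarith
  set x := ((k:ℝ) * L) ^ ((1:ℝ)/t) with hxdef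
  have htpos : (0:ℝ) < t := by linarith
  have hx1 : 1 ≤ x := by
    rw [hxdef, show (1:ℝ) = ((k:ℝ)*L) ^ (0:ℝ) by rw [Real.rpow_zero]]
    exact Real.rpow_le_rpow_of_exponent_le hkL1 (by positivity)
  have hxpos : 0 < x := by linarith
  have hxt : x ^ t = (k:ℝ) * L := by
    rw [hxdef, ← Real.rpow_natCast (((k:ℝ)*L) ^ ((1:ℝ)/t)) t, ← Real.rpow_mul (le_of_lt hkLpos)]
    rw [one_div, inv_mul_cancel₀ (by positivity), Real.rpow_one]
  have hxle : x ≤ (k:ℝ) * L := by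
    calc x ≤ ((k:ℝ)*L) ^ (1:ℝ) := Real.rpow_le_rpow_of_exponent_le hkL1 (by
            rw [div_le_one htpos]; exact htR)
      _ = (k:ℝ)*L := Real.rpow_one _
  clear_value L x
  set M := N₀.choose t with hMdef
  have h4d : (4:ℝ) ≤ (d:ℝ)^2 := by nlinarith
  have h1t : (1:ℝ) ≤ (t:ℝ)^2 := by nlinarith
  have hNt : 1600*(t:ℝ)^2 ≤ N₀ := by
    have e2 : 400*(d:ℝ)^2*(t:ℝ)^2 ≤ 400*(d:ℝ)^2*(t:ℝ)^2 * x :=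
      le_mul_of_one_le_right (by positivity) hx1
    nlinarith
  have hN₀R : (1600:ℝ) ≤ N₀ := by nlinarith
  have hN₀pos : 0 < N₀ := by exact_mod_cast (by linarith : (0:ℝ) < N₀)
  have ht2N : (t:ℝ) ≤ (N₀:ℝ)/2 := by nlinarith [mul_pos htpos htpos]
  have htN : t ≤ N₀ + 1 := by
    have : (t:ℝ) ≤ N₀ := by linarith
    exact_mod_cast le_trans this (by norm_num : (N₀:ℝ) ≤ N₀ + 1)
  -- lower bound on choose
  have hM1 : ((N₀:ℝ)/(2*t))^t ≤ (M:ℝ) := by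
    have h1 : (((N₀ + 1 - t : ℕ):ℝ) ^ t) / ((Nat.factorial t : ℕ) : ℝ) ≤ (M:ℝ) := Nat.pow_le_choose t N₀
    have hcast : ((N₀ + 1 - t : ℕ):ℝ) = (N₀:ℝ) + 1 - t := by
      push_cast [Nat.cast_sub htN]; ring
    have h2 : ((N₀:ℝ)/2) ^ t ≤ ((N₀ + 1 - t : ℕ):ℝ) ^ t := by
      apply pow_le_pow_left₀ (by positivity)
      rw [hcast]; linarith
    have h3 : ((Nat.factorial t : ℕ) : ℝ) ≤ ((t:ℝ))^t := by
      exact_mod_cast Nat.cast_le.mpr (Nat.factorial_le_pow t)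
    have h4 : ((N₀:ℝ)/(2*t))^t = ((N₀:ℝ)/2)^t / ((t:ℝ))^t := by
      rw [← div_div, div_pow, div_pow]
    rw [h4]
    calc ((N₀:ℝ)/2)^t / ((t:ℝ))^t ≤ ((N₀ + 1 - t : ℕ):ℝ) ^ t / ((Nat.factorial t : ℕ) : ℝ) := by
          apply div_le_div₀ (by positivity) h2 (by positivity) h3
      _ ≤ (M:ℝ) := h1
  have hMk : 200*(d:ℝ)^2*t*((k:ℝ)*L) ≤ (M:ℝ) := by
    have h5 : 200*(d:ℝ)^2*t*x ≤ (N₀:ℝ)/(2*t) := by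
      rw [le_div_iff₀ (by positivity)]; nlinarith
    have h6 : (200*(d:ℝ)^2*t*x)^t ≤ ((N₀:ℝ)/(2*t))^t :=
      pow_le_pow_left₀ (by positivity) h5 t
    have h7 : (200*(d:ℝ)^2*t) * x^t ≤ (200*(d:ℝ)^2*t*x)^t := by
      rw [mul_pow]
      have hbase : (1:ℝ) ≤ 200*(d:ℝ)^2*t := by nlinarith
      have hself : 200*(d:ℝ)^2*t ≤ (200*(d:ℝ)^2*t)^t := le_self_pow₀ hbase (by omega)
      have hxtpos : (0:ℝ) ≤ x^t := by positivity
      exact mul_le_mul_of_nonneg_right hself hxtpos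
    calc 200*(d:ℝ)^2*t*((k:ℝ)*L) = (200*(d:ℝ)^2*t) * x^t := by rw [hxt]
      _ ≤ (200*(d:ℝ)^2*t*x)^t := h7
      _ ≤ ((N₀:ℝ)/(2*t))^t := h6
      _ ≤ (M:ℝ) := hM1
  -- log bound
  have hlogN : Real.log N₀ ≤ 7 + 2*d + 2*t + 2*L := by
    have hub : (N₀:ℝ) ≤ 401*(d:ℝ)^2*t^2*x := hhigh
    have h8 : Real.log N₀ ≤ Real.log (401*(d:ℝ)^2*t^2*x) :=
      Real.log_le_log (by exact_mod_cast hN₀pos) hub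
    have h9 : Real.log (401*(d:ℝ)^2*t^2*x)
        = Real.log 401 + 2*Real.log d + 2*Real.log t + Real.log x := by
      rw [Real.log_mul (by positivity) (by positivity),
          Real.log_mul (by positivity) (by positivity),
          Real.log_mul (by positivity) (by positivity),
          Real.log_pow, Real.log_pow]
      push_cast; ring
    have h401 : Real.log 401 ≤ 7 := by
      have : Real.log 401 ≤ Real.log 1024 := Real.log_le_log (by norm_num) (by norm_num)
      have h1024 : Real.log 1024 = 10 * Real.log 2 := by
        rw [show (1024:ℝ) = 2^(10:ℕ) by norm_num, Real.log_pow]; push_cast; ring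
      have := Real.log_two_lt_d9
      linarith
    have hld : Real.log d ≤ d := by
      have := Real.log_le_sub_one_of_pos (show (0:ℝ) < d by linarith)
      linarith
    have hlt' : Real.log t ≤ t := by
      have := Real.log_le_sub_one_of_pos htpos
      linarith
    have hlx : Real.log x ≤ 2*L := by
      have h10 : Real.log x = (1/t) * Real.log ((k:ℝ)*L) := by
        rw [hxdef]; exact Real.log_rpow hkLpos _
      have h11 : Real.log ((k:ℝ)*L) ≤ 2*L := by
        have h11a : Real.log ((k:ℝ)*L) ≤ Real.log ((k:ℝ)*k) := Real.log_le_log hkLpos (by nlinarith)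
        have h11b : Real.log ((k:ℝ)*(k:ℝ)) = 2*L := by
          rw [Real.log_mul (by linarith) (by linarith)]; rw [hLdef]; ring
        linarith
      have h12 : 0 ≤ Real.log ((k:ℝ)*L) := Real.log_nonneg hkL1
      have h13 : (1/t : ℝ) ≤ 1 := by rw [div_le_one htpos]; exact htR
      nlinarith
    linarith
  have hkey : 2*(d:ℝ)*Real.log N₀ + Real.log k + 1 ≤ (M:ℝ)/k := by
    have hMk' : 200*(d:ℝ)^2*t*L ≤ (M:ℝ)/k := by
      rw [le_div_iff₀ (by linarith : (0:ℝ) < k)]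
      linarith [hMk]
    have htL : (1:ℝ)/2 ≤ (t:ℝ)*L := by nlinarith [htR, hLhalf]
    have hdtL : (1:ℝ) ≤ (d:ℝ)*((t:ℝ)*L) := by nlinarith [hdR, htL]
    have hdL : (1:ℝ) ≤ (d:ℝ)*L := by nlinarith [hdR, hLhalf]
    have h2d : 2*(d:ℝ) ≤ (d:ℝ)^2 := by nlinarith [hdR]
    have hL0 : (0:ℝ) ≤ L := by linarith only [hLhalf]
    have hdt : (1:ℝ) ≤ (d:ℝ)*(t:ℝ) := by nlinarith [hdR, htR]
    have hdd : (d:ℝ) ≤ (d:ℝ)^2 := by nlinarith [hdR]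
    have hp1 := mul_le_mul_of_nonneg_left hdtL (show (0:ℝ) ≤ 14*(d:ℝ) by linarith only [hdR])
    have hp2 := mul_le_mul_of_nonneg_left htL (show (0:ℝ) ≤ 8*(d:ℝ)^2 by positivity)
    have hp3 := mul_le_mul_of_nonneg_left hdL (show (0:ℝ) ≤ 4*(d:ℝ)*(t:ℝ) by positivity)
    have hp4 := mul_le_mul_of_nonneg_left h2d (show (0:ℝ) ≤ 2*L by linarith only [hLhalf])
    have hp5 := mul_le_mul_of_nonneg_left htR (show (0:ℝ) ≤ 2*(d:ℝ)^2*L by positivity)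
    have hp8 := mul_le_mul_of_nonneg_left hdt hL0
    have hLd2t : (d:ℝ)*((t:ℝ)*L) ≤ (d:ℝ)^2*((t:ℝ)*L) :=
      mul_le_mul_of_nonneg_right hdd (mul_nonneg (by positivity) hL0)
    have hA : (0:ℝ) ≤ (d:ℝ)^2*((t:ℝ)*L) := mul_nonneg (by positivity) (mul_nonneg (by positivity) hL0)
    have expand : 2*(d:ℝ)*(7 + 2*d + 2*t + 2*L) + L + 1 ≤ 200*(d:ℝ)^2*t*L := by
      linarith only [hp1, hp2, hp3, hp4, hp5, hp8, hdtL, hLd2t, hA]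
    have hmono : 2*(d:ℝ)*Real.log N₀ + Real.log k + 1 ≤ 2*(d:ℝ)*(7 + 2*d + 2*t + 2*L) + L + 1 := by
      have hd0 : (0:ℝ) ≤ 2*(d:ℝ) := by linarith
      have := mul_le_mul_of_nonneg_left hlogN hd0
      rw [hLdef] at *
      linarith
    linarith
  -- final exponential comparison, in ℝ
  have hfinal : ((N₀:ℝ))^(2*d) * k * ((k:ℝ)-1)^M < (k:ℝ)^M := by
    have hbase : (k:ℝ) - 1 ≤ k * Real.exp (-(1/k)) := by
      have hk0 : (0:ℝ) < k := by linarith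
      have hmul := mul_le_mul_of_nonneg_left (Real.add_one_le_exp (-(1/k : ℝ))) (le_of_lt hk0)
      have hid : (k:ℝ)*(-(1/(k:ℝ))+1) = (k:ℝ)-1 := by field_simp; ring
      linarith
    have hpow : ((k:ℝ)-1)^M ≤ (k:ℝ)^M * Real.exp (-((M:ℝ)/k)) := by
      calc ((k:ℝ)-1)^M ≤ ((k:ℝ) * Real.exp (-(1/k)))^M :=
            pow_le_pow_left₀ (by linarith) hbase M
        _ = (k:ℝ)^M * (Real.exp (-(1/k)))^M := mul_pow _ _ _
        _ = (k:ℝ)^M * Real.exp (-((M:ℝ)/k)) := by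
            rw [← Real.exp_nat_mul]; congr 2; field_simp
    have hsmall : ((N₀:ℝ))^(2*d) * k * Real.exp (-((M:ℝ)/k)) < 1 := by
      have e1 : ((N₀:ℝ))^(2*d) = Real.exp (2*d * Real.log N₀) := by
        rw [← Real.exp_log (show (0:ℝ) < ((N₀:ℝ))^(2*d) by positivity), Real.log_pow]
        push_cast; ring_nf
      have e2 : (k:ℝ) = Real.exp (Real.log k) := (Real.exp_log (by linarith)).symm
      calc ((N₀:ℝ))^(2*d) * k * Real.exp (-((M:ℝ)/k))
          = Real.exp (2*d * Real.log N₀ + Real.log k + -((M:ℝ)/k)) := by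
            rw [Real.exp_add, Real.exp_add, ← e1,
              Real.exp_log (show (0:ℝ) < (k:ℝ) by linarith)]
        _ ≤ Real.exp (-1) := by
            apply Real.exp_le_exp.mpr; linarith
        _ < 1 := by
            rw [show (1:ℝ) = Real.exp 0 by rw [Real.exp_zero]]
            exact Real.exp_lt_exp.mpr (by norm_num)
    calc ((N₀:ℝ))^(2*d) * k * ((k:ℝ)-1)^M ≤ ((N₀:ℝ))^(2*d) * k * ((k:ℝ)^M * Real.exp (-((M:ℝ)/k))) := by
          apply mul_le_mul_of_nonneg_left hpow (by positivity)
      _ = (((N₀:ℝ))^(2*d) * k * Real.exp (-((M:ℝ)/k))) * (k:ℝ)^M := by ring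
      _ < 1 * (k:ℝ)^M := by
          apply mul_lt_mul_of_pos_right hsmall (by positivity)
      _ = (k:ℝ)^M := one_mul _
  have hcast : ((k - 1 : ℕ):ℝ) = (k:ℝ) - 1 := by
    rw [Nat.cast_sub (by omega)]; norm_num
  have : ((N₀^(2*d) * k * (k-1)^M : ℕ) : ℝ) < ((k^M : ℕ) : ℝ) := by
    push_cast [hcast]
    convert hfinal using 2 <;> push_cast <;> ring
  exact_mod_cast this

set_option maxHeartbeats 2000000 in
/-- For fixed `d ≥ 2` and `t ≥ 1` there is a constant `C > 0`
such that for every `k ≥ 2` and every grid `P = {0,…,m-1}^d ⊆ ℝ^d` there is a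
`k`-coloring of the `t`-element subsets of `P` such that every axis-parallel
closed box containing at least `C·(k·ln k)^(1/t)` grid points contains, for
each color, a `t`-element subset of that color. -/
theorem grid_box_tuple_coloring
    (d t : ℕ) (hd : 2 ≤ d) (ht : 1 ≤ t) :
    ∃ C : ℝ, 0 < C ∧
      ∀ (k : ℕ), 2 ≤ k →
        ∀ (m : ℕ) (P : Set (EuclideanSpace ℝ (Fin d))),
          P = {p : EuclideanSpace ℝ (Fin d) | ∀ i, ∃ a : ℕ, a < m ∧ p i = a} →
          ∃ χ : Set (EuclideanSpace ℝ (Fin d)) → Fin k,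
            ∀ a b : EuclideanSpace ℝ (Fin d),
              C * ((k : ℝ) * Real.log k) ^ ((1 : ℝ) / t) ≤
                ((P ∩ {p : EuclideanSpace ℝ (Fin d) | ∀ i, a i ≤ p i ∧ p i ≤ b i}).ncard : ℝ) →
              ∀ col : Fin k, ∃ T : Set (EuclideanSpace ℝ (Fin d)),
                T ⊆ P ∩ {p : EuclideanSpace ℝ (Fin d) | ∀ i, a i ≤ p i ∧ p i ≤ b i} ∧
                T.ncard = t ∧ χ T = col := by
  classical
  set C₀ : ℕ := 400*d^2*t^2 with hC₀def
  have hC₀pos : 0 < C₀ := by positivity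
  refine ⟨(C₀:ℝ) + 1, by positivity, ?_⟩
  intro k hk m P hP
  have hdR : (2:ℝ) ≤ d := by exact_mod_cast hd
  have htR : (1:ℝ) ≤ t := by exact_mod_cast ht
  have hkR : (2:ℝ) ≤ k := by exact_mod_cast hk
  have htpos : (0:ℝ) < t := by linarith
  set L := Real.log k with hLdef
  have hLhalf : (1/2 : ℝ) ≤ L := by
    have h2 : Real.log 2 ≤ L := Real.log_le_log (by norm_num) hkR
    have := Real.log_two_gt_d9
    linarith
  have hkL1 : 1 ≤ (k:ℝ) * L := by nlinarith
  set x := ((k:ℝ) * L) ^ ((1:ℝ)/t) with hxdef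
  have hx1 : 1 ≤ x := by
    rw [hxdef, show (1:ℝ) = ((k:ℝ)*L) ^ (0:ℝ) by rw [Real.rpow_zero]]
    exact Real.rpow_le_rpow_of_exponent_le hkL1 (by positivity)
  set q : ℕ := ⌈(C₀:ℝ) * x⌉₊ with hqdef
  have hqlow : (C₀:ℝ) * x ≤ q := Nat.le_ceil _
  have hqhigh : (q:ℝ) ≤ 401*(d:ℝ)^2*t^2 * x := by
    have h1 : (q:ℝ) ≤ (C₀:ℝ)*x + 1 := by
      have := Nat.ceil_lt_add_one (show (0:ℝ) ≤ (C₀:ℝ)*x by positivity)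
      linarith
    have h2 : (C₀:ℝ) = 400*(d:ℝ)^2*t^2 := by rw [hC₀def]; push_cast; ring
    have h4d : (4:ℝ) ≤ (d:ℝ)^2 := by nlinarith
    have h1t : (1:ℝ) ≤ (t:ℝ)^2 := by nlinarith
    have h3 : (1:ℝ) ≤ (d:ℝ)^2*(t:ℝ)^2*x := by
      have h5 : (4:ℝ)*1 ≤ (d:ℝ)^2*(t:ℝ)^2 :=
        mul_le_mul h4d h1t (by norm_num) (by positivity)
      nlinarith
    nlinarith
  have hqlow' : 400*(d:ℝ)^2*t^2 * x ≤ q := by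
    have h2 : (C₀:ℝ) = 400*(d:ℝ)^2*t^2 := by rw [hC₀def]; push_cast; ring
    rw [← h2]; exact hqlow
  have hq0 : 0 < q := by
    have : (1:ℝ) ≤ (C₀:ℝ)*x := by
      have : (1:ℝ) ≤ (C₀:ℝ) := by exact_mod_cast hC₀pos
      nlinarith
    have : (1:ℝ) ≤ (q:ℝ) := le_trans this hqlow
    exact_mod_cast (by exact_mod_cast this : (1:ℕ) ≤ q)
  -- the torus
  set M := q.choose t with hMdef
  have hkey := key_ineq d t k q hd ht hk hqlow' hqhigh
  -- torus boxes
  set TB : (Fin d → ℕ) → (Fin d → ℕ) → Finset (Fin d → Fin q) := fun lo s =>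
    Fintype.piFinset (fun i =>
      (Finset.range (s i)).image (fun j => (⟨(lo i + j) % q, Nat.mod_lt _ hq0⟩ : Fin q))) with hTBdef
  set 𝓑 : Finset (Finset (Fin d → Fin q)) :=
    ((Finset.univ : Finset ((Fin d → Fin q) × (Fin d → Fin q))).filter
      (fun p => q ≤ ∏ i, ((p.2 i : ℕ) + 1))).image
      (fun p => TB (fun i => (p.1 i : ℕ)) (fun i => (p.2 i : ℕ) + 1)) with h𝓑def
  -- card of a torus box
  have hTBcard : ∀ (lo s : Fin d → ℕ), (∀ i, 1 ≤ s i) → (∀ i, s i ≤ q) →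
      (TB lo s).card = ∏ i, s i := by
    intro lo s hs1 hsq
    rw [hTBdef]
    rw [Fintype.card_piFinset]
    congr 1
    funext i
    rw [Finset.card_image_of_injOn, Finset.card_range]
    intro j₁ h₁ j₂ h₂ hj
    simp only [Finset.coe_range, Set.mem_Iio] at h₁ h₂
    have hvals : (lo i + j₁) % q = (lo i + j₂) % q := by
      have := congrArg Fin.val hj; simpa using this
    have hmod : j₁ % q = j₂ % q := Nat.ModEq.add_left_cancel' (lo i) hvals
    rwa [Nat.mod_eq_of_lt (lt_of_lt_of_le h₁ (hsq i)),
      Nat.mod_eq_of_lt (lt_of_lt_of_le h₂ (hsq i))] at hmod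
  have h𝓑card : 𝓑.card ≤ q^(2*d) := by
    calc 𝓑.card ≤ ((Finset.univ : Finset ((Fin d → Fin q) × (Fin d → Fin q))).filter
          (fun p => q ≤ ∏ i, ((p.2 i : ℕ) + 1))).card := Finset.card_image_le
      _ ≤ (Finset.univ : Finset ((Fin d → Fin q) × (Fin d → Fin q))).card :=
          Finset.card_filter_le _ _
      _ = (q^d) * (q^d) := by
          simp [Finset.card_univ, Fintype.card_prod, Fintype.card_fun]
      _ = q^(2*d) := by rw [← pow_add]; congr 1; omega
  have hM𝓑 : ∀ Q ∈ 𝓑, M ≤ (Q.powersetCard t).card := by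
    intro Q hQ
    rw [h𝓑def, Finset.mem_image] at hQ
    obtain ⟨p, hpmem, rfl⟩ := hQ
    rw [Finset.mem_filter] at hpmem
    have hs1 : ∀ i, 1 ≤ (p.2 i : ℕ) + 1 := fun i => by omega
    have hsq : ∀ i, (p.2 i : ℕ) + 1 ≤ q := fun i => (p.2 i).isLt
    rw [Finset.card_powersetCard, hTBcard _ _ hs1 hsq, hMdef]
    exact Nat.choose_le_choose t hpmem.2
  have hlt : 𝓑.card * k * (k-1)^M < k^M := by
    refine lt_of_le_of_lt (Nat.mul_le_mul_right _ (Nat.mul_le_mul_right _ h𝓑card)) ?_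
    exact hkey
  obtain ⟨f, hf⟩ := exists_coloring k t M (by omega) 𝓑 hM𝓑 hlt
  set redE : EuclideanSpace ℝ (Fin d) → (Fin d → Fin q) :=
    fun p => fun i => (⟨⌊p i⌋.toNat % q, Nat.mod_lt _ hq0⟩ : Fin q) with hredEdef
  set χ : Set (EuclideanSpace ℝ (Fin d)) → Fin k :=
    fun S => if h : (redE '' S).Finite then f h.toFinset else f ∅ with hχdef
  refine ⟨χ, ?_⟩
  intro a b hbox col
  set Box := {p : EuclideanSpace ℝ (Fin d) | ∀ i, a i ≤ p i ∧ p i ≤ b i} with hBoxdef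
  set emb : (Fin d → ℕ) → EuclideanSpace ℝ (Fin d) :=
    fun v => WithLp.toLp 2 (fun i => (v i : ℝ)) with hembdef
  have hembinj : Function.Injective emb := by
    intro u v h
    funext i
    have h2 : ((u i : ℕ) : ℝ) = ((v i : ℕ) : ℝ) := congrArg (fun p : EuclideanSpace ℝ (Fin d) => p i) h
    exact_mod_cast h2
  set I : Fin d → Finset ℕ := fun i =>
    (Finset.range m).filter (fun v => a i ≤ (v:ℝ) ∧ (v:ℝ) ≤ b i) with hIdef
  set W : Finset (Fin d → ℕ) := Fintype.piFinset I with hWdef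
  have hmemI : ∀ i y, y ∈ I i ↔ (y < m ∧ a i ≤ (y:ℝ) ∧ (y:ℝ) ≤ b i) := by
    intro i y
    rw [hIdef]
    simp [Finset.mem_filter, Finset.mem_range, and_assoc]
  have hPBox : P ∩ Box = emb '' (W : Set (Fin d → ℕ)) := by
    ext p
    constructor
    · rintro ⟨hp1, hp2⟩
      rw [hP] at hp1
      choose v hv1 hv2 using hp1
      refine ⟨v, ?_, ?_⟩
      · rw [hWdef, Finset.mem_coe, Fintype.mem_piFinset]
        intro i
        rw [hmemI]
        refine ⟨hv1 i, ?_, ?_⟩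
        · have := (hp2 i).1; rwa [hv2 i] at this
        · have := (hp2 i).2; rwa [hv2 i] at this
      · rw [hembdef]; exact PiLp.ext fun i => (hv2 i).symm
    · rintro ⟨v, hv, rfl⟩
      rw [hWdef, Finset.mem_coe, Fintype.mem_piFinset] at hv
      constructor
      · rw [hP]
        intro i
        exact ⟨v i, ((hmemI i (v i)).1 (hv i)).1, rfl⟩
      · intro i
        have h := (hmemI i (v i)).1 (hv i)
        exact ⟨h.2.1, h.2.2⟩
  have hcardW : (P ∩ Box).ncard = W.card := by
    rw [hPBox, Set.ncard_image_of_injective _ hembinj, Set.ncard_coe_finset]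
  have hqW : q ≤ W.card := by
    have h1 : (q:ℝ) ≤ ((C₀:ℝ)+1) * x := by
      have h2 := Nat.ceil_lt_add_one (show (0:ℝ) ≤ (C₀:ℝ)*x by positivity)
      have h3 : (q:ℝ) < (C₀:ℝ)*x + 1 := by rw [hqdef]; exact_mod_cast h2
      nlinarith
    have h2 : (q:ℝ) ≤ ((P ∩ Box).ncard : ℝ) := le_trans h1 hbox
    rw [hcardW] at h2
    exact_mod_cast h2
  have hWprod : W.card = ∏ i, (I i).card := by
    rw [hWdef]; exact Fintype.card_piFinset I
  have hInonempty : ∀ i, (I i).Nonempty := by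
    intro i
    rw [← Finset.card_pos]
    by_contra h
    push_neg at h
    have h0 : (I i).card = 0 := by omega
    have : W.card = 0 := by
      rw [hWprod]
      exact Finset.prod_eq_zero (Finset.mem_univ i) h0
    omega
  set lo : Fin d → ℕ := fun i => (I i).min' (hInonempty i) with hlodef
  set hi : Fin d → ℕ := fun i => (I i).max' (hInonempty i) with hhidef
  set c : Fin d → ℕ := fun i => (I i).card with hcdef
  have hc1 : ∀ i, 1 ≤ c i := fun i => Finset.card_pos.2 (hInonempty i)
  set s : Fin d → ℕ := fun i => min (c i) q with hsdef
  have hs1 : ∀ i, 1 ≤ s i := fun i => le_min (hc1 i) hq0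
  have hsq : ∀ i, s i ≤ q := fun i => min_le_right _ _
  have hlohi : ∀ i, lo i + c i - 1 ≤ hi i := by
    intro i
    have hsub : I i ⊆ Finset.Icc (lo i) (hi i) := fun y hy =>
      Finset.mem_Icc.2 ⟨Finset.min'_le _ _ hy, Finset.le_max' _ _ hy⟩
    have h2 := Finset.card_le_card hsub
    rw [Nat.card_Icc] at h2
    have hlom : lo i ≤ hi i := Finset.min'_le _ _ (Finset.max'_mem (I i) (hInonempty i))
    show lo i + (I i).card - 1 ≤ hi i
    omega
  set J : Fin d → Finset ℕ := fun i => Finset.Icc (lo i) (lo i + s i - 1) with hJdef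
  have hJI : ∀ i, J i ⊆ I i := by
    intro i y hy
    rw [hJdef, Finset.mem_Icc] at hy
    have hslec : s i ≤ c i := min_le_left _ _
    have hyhi : y ≤ hi i := le_trans (le_trans hy.2 (by omega)) (hlohi i)
    have hlomem := Finset.min'_mem (I i) (hInonempty i)
    have hhimem := Finset.max'_mem (I i) (hInonempty i)
    rw [hmemI] at hlomem hhimem ⊢
    refine ⟨lt_of_le_of_lt hyhi hhimem.1, ?_, ?_⟩
    · refine le_trans hlomem.2.1 ?_
      exact (Nat.cast_le (α := ℝ)).2 hy.1
    · refine le_trans ?_ hhimem.2.2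
      exact_mod_cast Nat.cast_le.2 hyhi
  have hJcard : ∀ i, (J i).card = s i := by
    intro i
    rw [hJdef, Nat.card_Icc]
    have := hs1 i
    omega
  have hqprod : q ≤ ∏ i, s i := by
    by_cases hall : ∀ i, c i ≤ q
    · have hseq : ∀ i, s i = c i := fun i => min_eq_left (hall i)
      calc q ≤ W.card := hqW
        _ = ∏ i, c i := hWprod
        _ = ∏ i, s i := Finset.prod_congr rfl (fun i _ => (hseq i).symm)
    · push_neg at hall
      obtain ⟨j, hj⟩ := hall
      have hsj : s j = q := min_eq_right (le_of_lt hj)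
      calc q = s j := hsj.symm
        _ ≤ ∏ i, s i := Finset.single_le_prod' (fun i _ => hs1 i) (Finset.mem_univ j)
  set ρ : (Fin d → ℕ) → (Fin d → Fin q) :=
    fun v i => (⟨v i % q, Nat.mod_lt _ hq0⟩ : Fin q) with hρdef
  have hQbeq : TB lo s = (Fintype.piFinset J).image ρ := by
    have hJim : ∀ i, (Finset.range (s i)).image
        (fun j => (⟨(lo i + j) % q, Nat.mod_lt _ hq0⟩ : Fin q))
        = (J i).image (fun y => (⟨y % q, Nat.mod_lt _ hq0⟩ : Fin q)) := by
      intro i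
      have hJ2 : J i = (Finset.range (s i)).image (fun j => lo i + j) := by
        ext y
        rw [hJdef, Finset.mem_Icc, Finset.mem_image]
        constructor
        · intro hy
          exact ⟨y - lo i, Finset.mem_range.2 (by have := hs1 i; omega), by omega⟩
        · rintro ⟨j, hjmem, rfl⟩
          rw [Finset.mem_range] at hjmem
          have := hs1 i
          omega
      rw [hJ2, Finset.image_image]
      rfl
    rw [hTBdef]
    calc Fintype.piFinset (fun i => (Finset.range (s i)).image
          (fun j => (⟨(lo i + j) % q, Nat.mod_lt _ hq0⟩ : Fin q)))
        = Fintype.piFinset (fun i => (J i).image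
          (fun y => (⟨y % q, Nat.mod_lt _ hq0⟩ : Fin q))) := by
          congr 1
          funext i
          exact hJim i
      _ = (Fintype.piFinset J).image ρ := by
          rw [Fintype.piFinset_image]
  have hQmem : TB lo s ∈ 𝓑 := by
    rw [h𝓑def, Finset.mem_image]
    refine ⟨(fun i => (⟨lo i % q, Nat.mod_lt _ hq0⟩ : Fin q),
      fun i => (⟨s i - 1, by have h1 := hs1 i; have h2 := hsq i; omega⟩ : Fin q)), ?_, ?_⟩
    · rw [Finset.mem_filter]
      refine ⟨Finset.mem_univ _, ?_⟩
      have heq : ∀ i : Fin d, ((s i - 1) + 1) = s i := fun i => by have := hs1 i; omega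
      calc q ≤ ∏ i, s i := hqprod
        _ = _ := (Finset.prod_congr rfl (fun i _ => heq i)).symm
    · have hgoal : TB (fun i => lo i % q) (fun i => (s i - 1) + 1) = TB lo s := by
        rw [show (fun i => (s i - 1) + 1) = s from funext (fun i => by have := hs1 i; omega)]
        simp only [hTBdef]
        congr 1
        funext i
        congr 1
        funext j
        exact Fin.ext (Nat.mod_add_mod (lo i) q j)
      exact hgoal
  obtain ⟨T', hT'mem, hfT'⟩ := hf (TB lo s) hQmem col
  rw [Finset.mem_powersetCard] at hT'mem
  obtain ⟨hT'sub, hT'card⟩ := hT'mem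
  have hinjρ : Set.InjOn ρ (Fintype.piFinset J : Set (Fin d → ℕ)) := by
    intro u hu v hv huv
    rw [Finset.mem_coe, Fintype.mem_piFinset] at hu hv
    funext i
    have hui := hu i
    have hvi := hv i
    rw [hJdef, Finset.mem_Icc] at hui hvi
    have hmodeq : u i % q = v i % q := by
      have := congrFun huv i
      rw [hρdef] at this
      exact congrArg Fin.val this
    have hs' := hsq i
    rcases le_total (u i) (v i) with hle | hle
    · have hdvd : q ∣ v i - u i := (Nat.modEq_iff_dvd' hle).1 hmodeq
      have hlt : v i - u i < q := by omega
      have := Nat.eq_zero_of_dvd_of_lt ?_ hlt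
      · omega
      · exact hdvd
    · have hdvd : q ∣ u i - v i := (Nat.modEq_iff_dvd' hle).1 hmodeq.symm
      have hlt : u i - v i < q := by omega
      have := Nat.eq_zero_of_dvd_of_lt ?_ hlt
      · omega
      · exact hdvd
  set T'' := (Fintype.piFinset J).filter (fun v => ρ v ∈ T') with hT''def
  have hT''sub : T'' ⊆ Fintype.piFinset J := Finset.filter_subset _ _
  have hT''img : T''.image ρ = T' := by
    apply Finset.Subset.antisymm
    · intro u hu
      rw [Finset.mem_image] at hu
      obtain ⟨v, hv, rfl⟩ := hu
      exact (Finset.mem_filter.1 hv).2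
    · intro u hu
      have hmem : u ∈ TB lo s := hT'sub hu
      rw [hQbeq, Finset.mem_image] at hmem
      obtain ⟨v, hv, rfl⟩ := hmem
      exact Finset.mem_image.2 ⟨v, Finset.mem_filter.2 ⟨hv, hu⟩, rfl⟩
  have hT''card : T''.card = t := by
    have := Finset.card_image_of_injOn
      (hinjρ.mono (by exact_mod_cast Finset.coe_subset.2 hT''sub))
    rw [hT''img, hT'card] at this
    omega
  refine ⟨emb '' (T'' : Set (Fin d → ℕ)), ?_, ?_, ?_⟩
  · rintro p ⟨v, hv, rfl⟩
    rw [hPBox]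
    refine ⟨v, ?_, rfl⟩
    rw [Finset.mem_coe] at hv ⊢
    rw [hWdef]
    exact Fintype.piFinset_subset _ _ hJI (hT''sub hv)
  · rw [Set.ncard_image_of_injective _ hembinj, Set.ncard_coe_finset]
    exact hT''card
  · have hcomp : ∀ v : Fin d → ℕ, redE (emb v) = ρ v := by
      intro v
      rw [hredEdef, hembdef, hρdef]
      funext i
      congr 1
      norm_num
    have himgred : redE '' (emb '' (T'' : Set (Fin d → ℕ))) = (T' : Set (Fin d → Fin q)) := by
      rw [← Set.image_comp, ← hT''img, Finset.coe_image]
      apply Set.image_congr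
      intro v _
      exact hcomp v
    show (if h : (redE '' (emb '' (T'' : Set (Fin d → ℕ)))).Finite then f h.toFinset else f ∅) = col
    have hfin : (redE '' (emb '' (T'' : Set (Fin d → ℕ)))).Finite := by
      rw [himgred]
      exact (T' : Set (Fin d → Fin q)).toFinite
    rw [dif_pos hfin]
    have hToF : hfin.toFinset = T' := by
      ext u
      rw [Set.Finite.mem_toFinset, himgred, Finset.mem_coe]
    rw [hToF]
    exact hfT'
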